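/- Let f(x,y) = (x² − y)² and g(x,y) = x² e^{4y} on ℝ². Then ⟨∇g(x,y), ∇f(x,y)⟩ = 0 for all (x,y) ∈ ℝ² (so g is a conserved quantity of the gradient flow of f), and f(x,y) + g(x,y) ≥ (x² + y)² + x² for all (x,y) ∈ ℝ²; in particular f + g is coercive and its unique global minimum is (0,0), the flat minimum of f. -/
import Mathlib


open Filter

/-- For `f(x,y) = (x² - y)²` and `g(x,y) = x²e^{4y}`: the gradients are orthogonal everywhere
(so `g` is conserved by the gradient flow of `f`), `f + g ≥ (x² + y)² + x²`, `f + g` is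
coercive, and its unique global minimum is `(0,0)`. -/
theorem stmt19 :
    (∀ x y : ℝ, (2 * x * Real.exp (4 * y)) * (2 * (x ^ 2 - y) * (2 * x)) +
        (4 * x ^ 2 * Real.exp (4 * y)) * (2 * (x ^ 2 - y) * (-1)) = 0) ∧
    (∀ x y : ℝ, (x ^ 2 + y) ^ 2 + x ^ 2 ≤ (x ^ 2 - y) ^ 2 + x ^ 2 * Real.exp (4 * y)) ∧
    Tendsto (fun p : ℝ × ℝ => (p.1 ^ 2 - p.2) ^ 2 + p.1 ^ 2 * Real.exp (4 * p.2))
      (cocompact (ℝ × ℝ)) atTop ∧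
    (∀ x y : ℝ,
      (0 ^ 2 - 0) ^ 2 + 0 ^ 2 * Real.exp (4 * 0) ≤ (x ^ 2 - y) ^ 2 + x ^ 2 * Real.exp (4 * y)) ∧
    (∀ x y : ℝ, (x ^ 2 - y) ^ 2 + x ^ 2 * Real.exp (4 * y) =
        (0 ^ 2 - 0) ^ 2 + 0 ^ 2 * Real.exp (4 * 0) → x = 0 ∧ y = 0) := by
  have key : ∀ x y : ℝ, (x ^ 2 + y) ^ 2 + x ^ 2 ≤ (x ^ 2 - y) ^ 2 + x ^ 2 * Real.exp (4 * y) := by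
    intro x y
    have h := Real.add_one_le_exp (4 * y)
    nlinarith [sq_nonneg x, mul_nonneg (sq_nonneg x) (sub_nonneg.2 h)]
  refine ⟨fun x y => by ring, key, ?_, ?_, ?_⟩
  · have hlow : ∀ p : ℝ × ℝ, ‖p‖ - 1 ≤ (p.1 ^ 2 - p.2) ^ 2 + p.1 ^ 2 * Real.exp (4 * p.2) := by
      rintro ⟨x, y⟩
      have hk := key x y
      have hexp := (Real.exp_pos (4 * y)).le
      simp only [Prod.norm_def, Real.norm_eq_abs]
      have h1 : |x| - 1 ≤ (x ^ 2 + y) ^ 2 + x ^ 2 := by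
        rcases abs_cases x with ⟨h, _⟩ | ⟨h, _⟩ <;> nlinarith [sq_nonneg (x ^ 2 + y)]
      have h2 : |y| - 1 ≤ (x ^ 2 + y) ^ 2 + x ^ 2 := by
        rcases abs_cases y with ⟨h, _⟩ | ⟨h, _⟩ <;>
          nlinarith [sq_nonneg (x ^ 2 + y), sq_nonneg (x ^ 2 + y + 1/2), sq_nonneg (y - 1/2)]
      have : max |x| |y| - 1 ≤ (x ^ 2 + y) ^ 2 + x ^ 2 := by
        rcases max_cases |x| |y| with ⟨h, _⟩ | ⟨h, _⟩ <;> rw [h] <;> assumption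
      linarith
    have h1 : Tendsto (fun p : ℝ × ℝ => ‖p‖ - 1) (cocompact (ℝ × ℝ)) atTop :=
      tendsto_atTop_add_const_right _ (-1) tendsto_norm_cocompact_atTop
    exact tendsto_atTop_mono hlow h1
  · intro x y
    have hexp := (Real.exp_pos (4 * y)).le
    norm_num
    positivity
  · intro x y h
    norm_num at h
    have hexp := Real.exp_pos (4 * y)
    have h1 : x ^ 2 * Real.exp (4 * y) = 0 :=
      le_antisymm (by nlinarith [sq_nonneg (x ^ 2 - y)]) (by positivity)
    have hx : x = 0 := by
      rcases mul_eq_zero.1 h1 with h2 | h2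
      · exact pow_eq_zero_iff two_ne_zero |>.1 h2
      · exact absurd h2 hexp.ne'
    subst hx
    constructor
    · rfl
    · nlinarith
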